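/- Let n ≥ 2 and p ≥ 1 be integers and let W be a p×p real symmetric positive semidefinite matrix with tr W > 0. For c > 0 define V(c) = (W + α̂(c) I_p)⁻¹ and â_S(c) = ((n − p − 1)·tr V(c) + α̂(c)·(tr V(c))²)/tr(V(c)² W) − (2c₀(c) + 1), where either α̂(c) = c with c₀(c) = 0, or α̂(c) = c·tr W with c₀(c) = c. Then as c → ∞, the matrix â_S(c)·V(c) converges (entrywise) to (((n−1)p)/tr W)·I_p in the case α̂(c) = c, and to (((n−1)p − 2)/tr W)·I_p in the case α̂(c) = c·tr W. -/

import Mathlib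

open Matrix Filter

/-- `V = (W + α I_p)⁻¹`. -/
noncomputable def Vr (p : ℕ) (W : Matrix (Fin p) (Fin p) ℝ) (α : ℝ) :
    Matrix (Fin p) (Fin p) ℝ :=
  (W + α • 1)⁻¹

/-- The SURE-minimizing weight `â_S` as a function of `W`, the ridge value `α` and `c₀`. -/
noncomputable def aSv (n p : ℕ) (W : Matrix (Fin p) (Fin p) ℝ) (α c0 : ℝ) : ℝ :=
  (((n : ℝ) - p - 1) * (Vr p W α).trace + α * ((Vr p W α).trace) ^ 2) /
      (Vr p W α * Vr p W α * W).trace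
    - (2 * c0 + 1)

/-- The SURE-minimizing second weight `b̂_S`. -/
noncomputable def bSv (n p : ℕ) (W : Matrix (Fin p) (Fin p) ℝ) (α c0 : ℝ) : ℝ :=
  (((n : ℝ) - 1) * p - 2) - (Vr p W α * W).trace * aSv n p W α c0

section aux

variable {p : ℕ} {W : Matrix (Fin p) (Fin p) ℝ}

lemma posDef_aux (hW : W.PosSemidef) {α : ℝ} (hα : 0 < α) : (W + α • 1).PosDef := by
  rw [Matrix.smul_one_eq_diagonal]
  exact Matrix.PosDef.posSemidef_add hW (Matrix.PosDef.diagonal fun _ => hα)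

lemma smul_Vr_eq (hW : W.PosSemidef) {α : ℝ} (hα : 0 < α) :
    α • Vr p W α = (α⁻¹ • W + 1)⁻¹ := by
  have hpd := posDef_aux hW hα
  have hdet : IsUnit (W + α • 1).det := (Matrix.isUnit_iff_isUnit_det _).mp hpd.isUnit
  have h1 : α⁻¹ • W + 1 = α⁻¹ • (W + α • 1) := by
    rw [smul_add, smul_smul, inv_mul_cancel₀ hα.ne', one_smul]
  rw [h1]
  symm
  apply Matrix.inv_eq_right_inv
  rw [Vr, Matrix.smul_mul, Matrix.mul_smul, Matrix.mul_nonsing_inv _ hdet, smul_smul,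
    inv_mul_cancel₀ hα.ne', one_smul]

/-- The basic limit: `α • V(α) → 1`. -/
lemma tendsto_smul_Vr (hW : W.PosSemidef) :
    Tendsto (fun α : ℝ => α • Vr p W α) atTop (nhds 1) := by
  have h0 : Tendsto (fun α : ℝ => α⁻¹ • W + 1) atTop
      (nhds (1 : Matrix (Fin p) (Fin p) ℝ)) := by
    have h := ((tendsto_inv_atTop_zero : Tendsto (fun α : ℝ => α⁻¹) atTop (nhds 0)).smul_const
      W).add_const (1 : Matrix (Fin p) (Fin p) ℝ)
    simpa using h
  have hc : ContinuousAt Inv.inv (1 : Matrix (Fin p) (Fin p) ℝ) := by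
    apply continuousAt_matrix_inv
    rw [Ring.inverse_eq_inv']
    simpa using continuousAt_inv₀ (one_ne_zero : (1:ℝ) ≠ 0)
  have h2 : Tendsto (fun α : ℝ => (α⁻¹ • W + 1)⁻¹) atTop (nhds 1) := by
    simpa [Function.comp_def, inv_one] using (hc.tendsto.comp h0)
  refine h2.congr' ?_
  filter_upwards [eventually_gt_atTop (0 : ℝ)] with α hα
  exact (smul_Vr_eq hW hα).symm

lemma tendsto_trace_Vr (hW : W.PosSemidef) :
    Tendsto (fun α : ℝ => α * (Vr p W α).trace) atTop (nhds p) := by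
  have hc : Continuous fun M : Matrix (Fin p) (Fin p) ℝ => M.trace :=
    Continuous.matrix_trace continuous_id
  have h := (hc.tendsto 1).comp (tendsto_smul_Vr hW)
  simp only [Function.comp_def, Matrix.trace_smul, smul_eq_mul, Matrix.trace_one,
    Fintype.card_fin] at h
  exact h

lemma tendsto_den_Vr (hW : W.PosSemidef) :
    Tendsto (fun α : ℝ => α ^ 2 * (Vr p W α * Vr p W α * W).trace) atTop (nhds W.trace) := by
  have hc : Continuous fun M : Matrix (Fin p) (Fin p) ℝ => (M * M * W).trace :=
    Continuous.matrix_trace ((continuous_id.matrix_mul continuous_id).matrix_mul continuous_const)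
  have h := (hc.tendsto 1).comp (tendsto_smul_Vr hW)
  simp only [Function.comp_def, one_mul, Matrix.one_mul] at h
  refine h.congr fun α => ?_
  rw [smul_mul_smul_comm, Matrix.smul_mul, Matrix.trace_smul, smul_eq_mul, sq]

/-- Main scalar asymptotics. -/
lemma tendsto_aSv_div (n : ℕ) (hW : W.PosSemidef) (htr : 0 < W.trace)
    (c0f : ℝ → ℝ) (L0 : ℝ)
    (hc0 : Tendsto (fun α : ℝ => (2 * c0f α + 1) / α) atTop (nhds L0)) :
    Tendsto (fun α : ℝ => aSv n p W α (c0f α) / α) atTop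
      (nhds (((n : ℝ) - 1) * p / W.trace - L0)) := by
  have hnum : Tendsto (fun α : ℝ =>
      (((n : ℝ) - p - 1) * (α * (Vr p W α).trace) + (α * (Vr p W α).trace) ^ 2)) atTop
      (nhds (((n : ℝ) - p - 1) * p + (p : ℝ) ^ 2)) :=
    ((tendsto_const_nhds.mul (tendsto_trace_Vr hW)).add ((tendsto_trace_Vr hW).pow 2))
  have hdiv : Tendsto (fun α : ℝ =>
      (((n : ℝ) - p - 1) * (α * (Vr p W α).trace) + (α * (Vr p W α).trace) ^ 2) /
        (α ^ 2 * (Vr p W α * Vr p W α * W).trace)) atTop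
      (nhds ((((n : ℝ) - p - 1) * p + (p : ℝ) ^ 2) / W.trace)) :=
    hnum.div (tendsto_den_Vr hW) htr.ne'
  have key : Tendsto (fun α : ℝ => aSv n p W α (c0f α) / α) atTop
      (nhds ((((n : ℝ) - p - 1) * p + (p : ℝ) ^ 2) / W.trace - L0)) := by
    refine (hdiv.sub hc0).congr' ?_
    filter_upwards [eventually_gt_atTop (0 : ℝ)] with α hα
    rw [aSv, sub_div]
    congr 1
    rcases eq_or_ne ((Vr p W α * Vr p W α * W).trace) 0 with h | h
    · simp [h]
    · field_simp
  have : (((n : ℝ) - p - 1) * p + (p : ℝ) ^ 2) = ((n : ℝ) - 1) * p := by ring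
  rwa [this] at key

end aux

section main
variable {p : ℕ} {W : Matrix (Fin p) (Fin p) ℝ}

lemma tendsto_main (n : ℕ) (hW : W.PosSemidef) (htr : 0 < W.trace)
    (c0f : ℝ → ℝ) (L0 : ℝ)
    (hc0 : Tendsto (fun α : ℝ => (2 * c0f α + 1) / α) atTop (nhds L0)) :
    Tendsto (fun α : ℝ => aSv n p W α (c0f α) • Vr p W α) atTop
      (nhds ((((n : ℝ) - 1) * p / W.trace - L0) • (1 : Matrix (Fin p) (Fin p) ℝ))) := by
  have h := (tendsto_aSv_div n hW htr c0f L0 hc0).smul (tendsto_smul_Vr hW)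
  refine h.congr' ?_
  filter_upwards [eventually_gt_atTop (0 : ℝ)] with α hα
  rw [smul_smul, div_mul_cancel₀ _ hα.ne']

theorem aS_smul_V_tendsto_atTop' (n : ℕ)
    (hW : W.PosSemidef) (htr : 0 < W.trace) :
    Tendsto (fun c : ℝ => aSv n p W c 0 • Vr p W c) atTop
        (nhds (((((n : ℝ) - 1) * p) / W.trace) • (1 : Matrix (Fin p) (Fin p) ℝ))) ∧
      Tendsto (fun c : ℝ => aSv n p W (c * W.trace) c • Vr p W (c * W.trace)) atTop
        (nhds (((((n : ℝ) - 1) * p - 2) / W.trace) • (1 : Matrix (Fin p) (Fin p) ℝ))) := by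
  constructor
  · have hc0 : Tendsto (fun α : ℝ => (2 * (0 : ℝ) + 1) / α) atTop (nhds 0) := by
      simpa [one_div] using (tendsto_inv_atTop_zero : Tendsto (fun α : ℝ => α⁻¹) atTop (nhds 0))
    have h := tendsto_main n hW htr (fun _ => 0) 0 hc0
    simpa using h
  · have hc0 : Tendsto (fun α : ℝ => (2 * (α / W.trace) + 1) / α) atTop
        (nhds (2 / W.trace)) := by
      have h2 : Tendsto (fun α : ℝ => 2 / W.trace + α⁻¹) atTop (nhds (2 / W.trace)) := by
        simpa using (tendsto_const_nhds (x := (2 / W.trace : ℝ))).add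
          (tendsto_inv_atTop_zero : Tendsto (fun α : ℝ => α⁻¹) atTop (nhds 0))
      refine h2.congr' ?_
      filter_upwards [eventually_gt_atTop (0 : ℝ)] with α hα
      field_simp
    have h := tendsto_main n hW htr (fun α => α / W.trace) (2 / W.trace) hc0
    have hcomp : Tendsto (fun c : ℝ => c * W.trace) atTop atTop :=
      Tendsto.atTop_mul_const htr tendsto_id
    have h2 := h.comp hcomp
    have heq : (fun c : ℝ => aSv n p W (c * W.trace) (c * W.trace / W.trace) •
        Vr p W (c * W.trace)) = fun c : ℝ => aSv n p W (c * W.trace) c • Vr p W (c * W.trace) := by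
      funext c
      rw [mul_div_cancel_right₀ _ htr.ne']
    rw [Function.comp_def] at h2
    rw [heq] at h2
    rw [sub_div]
    exact h2
end main


/-- As c → ∞, the matrix â_S(c)·V(c) converges entrywise to ((n−1)p/tr W)·I when
α̂ = c, and to (((n−1)p − 2)/tr W)·I when α̂ = c·tr W. -/
theorem aS_smul_V_tendsto_atTop (n p : ℕ) (hn : 2 ≤ n) (hp : 1 ≤ p)
    (W : Matrix (Fin p) (Fin p) ℝ) (hW : W.PosSemidef) (htr : 0 < W.trace) :
    Tendsto (fun c : ℝ => aSv n p W c 0 • Vr p W c) atTop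
        (nhds (((((n : ℝ) - 1) * p) / W.trace) • (1 : Matrix (Fin p) (Fin p) ℝ))) ∧
      Tendsto (fun c : ℝ => aSv n p W (c * W.trace) c • Vr p W (c * W.trace)) atTop
        (nhds (((((n : ℝ) - 1) * p - 2) / W.trace) • (1 : Matrix (Fin p) (Fin p) ℝ))) := by
  exact aS_smul_V_tendsto_atTop' n hW htr
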